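/- Let G be a (theta)-free graph and Ω a potential maximal clique of G. If Y ⊆ Ω is a stable set such that no vertex of Y is contained in any minimal separator N(D) (for components D of G\Ω) together with three or more vertices of Y (formally: for each component D of G\Ω, |N(D) ∩ Y| ≤ 2), then |Y| ≤ 3. -/

import Mathlib

universe u v

variable {V : Type u}

/-- The open neighborhood of a set `D`: vertices outside `D` with a neighbor in `D`. -/
def nbhd (G : SimpleGraph V) (D : Set V) : Set V :=
  {w | w ∉ D ∧ ∃ u ∈ D, G.Adj u w}

/-- `u` and `w` are joined by a walk all of whose vertices lie in `S`. -/
def ConnectedIn (G : SimpleGraph V) (S : Set V) (u w : V) : Prop :=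
  ∃ p : G.Walk u w, ∀ x ∈ p.support, x ∈ S

/-- `D` is a connected component of the subgraph of `G` induced on `S`. -/
def IsCompOf (G : SimpleGraph V) (S : Set V) (D : Set V) : Prop :=
  D.Nonempty ∧ D ⊆ S ∧ (∀ u ∈ D, ∀ w ∈ D, ConnectedIn G D u w) ∧
    ∀ u ∈ D, ∀ w ∈ S, G.Adj u w → w ∈ D

/-- `X` is a minimal separator: some `u, w` outside `X` are separated by `X`
but by no proper subset of `X`. -/
def IsMinimalSeparator (G : SimpleGraph V) (X : Set V) : Prop :=
  ∃ u w : V, u ∉ X ∧ w ∉ X ∧ ¬ ConnectedIn G Xᶜ u w ∧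
    ∀ Y : Set V, Y ⊂ X → ConnectedIn G Yᶜ u w

/-- A tree decomposition of the subgraph of `G` induced on `W`. -/
structure IsTreeDecompOn {T : Type v} (G : SimpleGraph V) (W : Set V)
    (tree : SimpleGraph T) (χ : T → Set V) : Prop where
  isTree : tree.IsTree
  bags_subset : ∀ t, χ t ⊆ W
  mem_bag : ∀ x ∈ W, ∃ t, x ∈ χ t
  edge_bag : ∀ x ∈ W, ∀ y ∈ W, G.Adj x y → ∃ t, x ∈ χ t ∧ y ∈ χ t
  trace_connected : ∀ x : V, ∀ t₁, x ∈ χ t₁ → ∀ t₂, x ∈ χ t₂ →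
    ConnectedIn tree {t | x ∈ χ t} t₁ t₂

/-- A tree decomposition of `G`. -/
def IsTreeDecomp {T : Type v} (G : SimpleGraph V)
    (tree : SimpleGraph T) (χ : T → Set V) : Prop :=
  IsTreeDecompOn G Set.univ tree χ

/-- The treewidth of `G`: the least `w` such that `G` has a tree decomposition
all of whose bags have at most `w + 1` vertices. -/
noncomputable def treewidth (G : SimpleGraph V) : ℕ :=
  sInf {w | ∃ (n : ℕ) (tree : SimpleGraph (Fin n)) (χ : Fin n → Set V),
    IsTreeDecomp G tree χ ∧ ∀ t, (χ t).ncard ≤ w + 1}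

/-- `G` is chordal: it has no induced cycle of length at least 4. -/
def IsChordal (G : SimpleGraph V) : Prop :=
  ∀ n : ℕ, 4 ≤ n → ¬ ∃ f : Fin n → V, Function.Injective f ∧
    ∀ i j : Fin n, G.Adj (f i) (f j) ↔
      ((i.val + 1) % n = j.val ∨ (j.val + 1) % n = i.val)

/-- `H` is a minimal chordal completion (fill-in) of `G`. -/
def IsMinimalChordalCompletion (G H : SimpleGraph V) : Prop :=
  G ≤ H ∧ IsChordal H ∧
    ∀ H' : SimpleGraph V, G ≤ H' → H' ≤ H → IsChordal H' → H' = H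

/-- `Ω` is a potential maximal clique of `G`: a maximal clique of some minimal
chordal completion of `G`. -/
def IsPMC (G : SimpleGraph V) (Ω : Set V) : Prop :=
  ∃ H : SimpleGraph V, IsMinimalChordalCompletion G H ∧
    H.IsClique Ω ∧ ∀ Ω' : Set V, H.IsClique Ω' → Ω ⊆ Ω' → Ω' = Ω

/-- The clique number `ω(G)`. -/
noncomputable def cliqueNumber (G : SimpleGraph V) : ℕ :=
  sSup {n | ∃ s : Finset V, G.IsNClique n s}

/-- A stable (independent) set of vertices. -/
def StableSet (G : SimpleGraph V) (S : Set V) : Prop :=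
  ∀ u ∈ S, ∀ w ∈ S, ¬ G.Adj u w

/-- The Ramsey number `R(t, s)`: the least `n` such that every graph on `n`
vertices contains a clique of size `t` or a stable set of size `s`. -/
noncomputable def ramseyNum (t s : ℕ) : ℕ :=
  sInf {n | ∀ G : SimpleGraph (Fin n),
    (∃ K : Finset (Fin n), G.IsNClique t K) ∨
    (∃ S : Finset (Fin n), S.card = s ∧ StableSet G ↑S)}

/-- `G` is `d`-degenerate: every induced subgraph has a vertex of degree less
than `d` (within that subgraph). -/
def DegenerateLE (G : SimpleGraph V) (d : ℕ) : Prop :=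
  ∀ W : Set V, W.Nonempty → ∃ x ∈ W, (W ∩ G.neighborSet x).ncard < d

/-- `D` is the big component for `x`: a component of `G \ N[x]` with more than
half of all vertices. -/
def IsBigComp (G : SimpleGraph V) (x : V) (D : Set V) : Prop :=
  IsCompOf G ((insert x (G.neighborSet x))ᶜ) D ∧ Nat.card V < 2 * D.ncard

/-- The `C`-side of the canonical star separation: `C(x) = {x} ∪ N(B(x))`. -/
def Cside (G : SimpleGraph V) (B : V → Set V) (x : V) : Set V :=
  insert x (nbhd G (B x))

/-- The `A`-side of the canonical star separation. -/
def Aside (G : SimpleGraph V) (B : V → Set V) (x : V) : Set V :=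
  (B x ∪ Cside G B x)ᶜ

/-- Star twins. -/
def StarTwins (G : SimpleGraph V) (B : V → Set V) (x y : V) : Prop :=
  B x = B y ∧ Cside G B x \ {x} = Cside G B y \ {y} ∧
    Aside G B x ∪ {x} = Aside G B y ∪ {y}

/-- The relation `≤_A` (partial order by `A`-sides, ties among star twins
broken by the total order `O`). -/
def leA (G : SimpleGraph V) (B : V → Set V) (O : V → ℕ) (x y : V) : Prop :=
  x = y ∨ (StarTwins G B x y ∧ O x < O y) ∨
    (¬ StarTwins G B x y ∧ y ∈ Aside G B x)

/-- `Core(S)`: the `≤_A`-minimal elements of `S`. -/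
def CoreS (G : SimpleGraph V) (S : Set V) (B : V → Set V) (O : V → ℕ) : Set V :=
  {x ∈ S | ∀ u ∈ S, leA G B O u x → u = x}

/-- The central bag `β(S)`. -/
def centralBag (G : SimpleGraph V) (S : Set V) (B : V → Set V) (O : V → ℕ) :
    Set V :=
  ⋂ x ∈ CoreS G S B O, (B x ∪ Cside G B x)

/-- `G` has a clique cutset. -/
def HasCliqueCutset (G : SimpleGraph V) : Prop :=
  ∃ K : Set V, G.IsClique K ∧ ∃ u w, u ∉ K ∧ w ∉ K ∧ ¬ ConnectedIn G Kᶜ u w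

/-- A chordless (induced) path, as a walk. -/
def IsInducedPathW (G : SimpleGraph V) {a b : V} (P : G.Walk a b) : Prop :=
  P.IsPath ∧ ∀ i j : ℕ, i + 2 ≤ j → j ≤ P.length →
    ¬ G.Adj (P.getVert i) (P.getVert j)

/-- Two `a`–`b` walks have disjoint and anticomplete interiors. -/
def IntDisjAnticomplete (G : SimpleGraph V) {a b : V} (P Q : G.Walk a b) : Prop :=
  ∀ u ∈ P.support, ∀ w ∈ Q.support, u ≠ a → u ≠ b → w ≠ a → w ≠ b →
    u ≠ w ∧ ¬ G.Adj u w

/-- `G` contains a theta (as an induced subgraph). -/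
def HasTheta (G : SimpleGraph V) : Prop :=
  ∃ (a b : V) (P₁ P₂ P₃ : G.Walk a b),
    ¬ G.Adj a b ∧
    IsInducedPathW G P₁ ∧ 2 ≤ P₁.length ∧
    IsInducedPathW G P₂ ∧ 2 ≤ P₂.length ∧
    IsInducedPathW G P₃ ∧ 2 ≤ P₃.length ∧
    IntDisjAnticomplete G P₁ P₂ ∧
    IntDisjAnticomplete G P₁ P₃ ∧
    IntDisjAnticomplete G P₂ P₃


namespace Aux


lemma connectedIn_refl {G : SimpleGraph V} {S : Set V} {u : V} (h : u ∈ S) :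
    ConnectedIn G S u u := ⟨SimpleGraph.Walk.nil, by simp [h]⟩

lemma connectedIn_step {G : SimpleGraph V} {S : Set V} {u w z : V}
    (h : ConnectedIn G S u w) (ha : G.Adj w z) (hz : z ∈ S) : ConnectedIn G S u z := by
  obtain ⟨p, hp⟩ := h
  refine ⟨p.concat ha, ?_⟩
  intro x hx
  rw [SimpleGraph.Walk.support_concat, List.mem_append, List.mem_singleton] at hx
  rcases hx with hx | rfl
  · exact hp x hx
  · exact hz

lemma connectedIn_of_mem_support {G : SimpleGraph V} {S : Set V} {u w : V}
    (p : G.Walk u w) (hp : ∀ x ∈ p.support, x ∈ S) {z : V} (hz : z ∈ p.support) :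
    ConnectedIn G S u z :=
  haveI := Classical.decEq V
  ⟨p.takeUntil z hz, fun x hx => hp x (p.support_takeUntil_subset hz hx)⟩

/-- The connectivity class of `u` inside `S` is a component. -/
lemma isCompOf_class {G : SimpleGraph V} {S : Set V} {u : V} (hu : u ∈ S) :
    IsCompOf G S {z | ConnectedIn G S u z} := by
  refine ⟨⟨u, connectedIn_refl hu⟩, ?_, ?_, ?_⟩
  · rintro z ⟨p, hp⟩
    exact hp z p.end_mem_support
  · rintro w1 ⟨p1, hp1⟩ w2 ⟨p2, hp2⟩
    refine ⟨p1.reverse.append p2, ?_⟩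
    intro x hx
    rw [SimpleGraph.Walk.mem_support_append_iff] at hx
    rcases hx with hx | hx
    · rw [SimpleGraph.Walk.support_reverse, List.mem_reverse] at hx
      exact connectedIn_of_mem_support p1 hp1 hx
    · exact connectedIn_of_mem_support p2 hp2 hx
  · rintro a ⟨p, hp⟩ w hw ha
    exact connectedIn_step ⟨p, hp⟩ ha hw

lemma walk_closed {G : SimpleGraph V} {S D : Set V}
    (hcl : ∀ u ∈ D, ∀ w ∈ S, G.Adj u w → w ∈ D) :
    ∀ {a c : V} (p : G.Walk a c), a ∈ D → (∀ x ∈ p.support, x ∈ S) → c ∈ D := by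
  intro a c p
  induction p with
  | nil => exact fun h _ => h
  | @cons a b c hab q ih =>
    intro ha hsup
    have hb : b ∈ D := hcl a ha b (hsup b (by simp)) hab
    exact ih hb (fun x hx => hsup x (by simp [hx]))

lemma comp_eq_of_mem {G : SimpleGraph V} {S D D' : Set V}
    (hD : IsCompOf G S D) (hD' : IsCompOf G S D') {z : V} (hz : z ∈ D) (hz' : z ∈ D') :
    D = D' := by
  have key : ∀ (E E' : Set V), IsCompOf G S E → IsCompOf G S E' → z ∈ E → z ∈ E' → E ⊆ E' := by
    rintro E E' hE hE' hzE hzE' w hw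
    obtain ⟨p, hp⟩ := hE.2.2.1 z hzE w hw
    exact walk_closed hE'.2.2.2 p hzE' (fun x hx => hE.2.1 (hp x hx))
  exact Set.Subset.antisymm (key D D' hD hD' hz hz') (key D' D hD' hD hz' hz)

lemma comp_anticomplete {G : SimpleGraph V} {S D D' : Set V}
    (hD : IsCompOf G S D) (hD' : IsCompOf G S D') (hne : D ≠ D') :
    ∀ u ∈ D, ∀ w ∈ D', u ≠ w ∧ ¬ G.Adj u w := by
  intro u hu w hw
  constructor
  · rintro rfl
    exact hne (comp_eq_of_mem hD hD' hu hw)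
  · intro hadj
    have : w ∈ D := hD.2.2.2 u hu w (hD'.2.1 hw) hadj
    exact hne (comp_eq_of_mem hD hD' this hw)

/-- A vertex not in `nbhd G D` and not in `D` has no neighbour in `D`. -/
lemma sep_vertex {G : SimpleGraph V} {D : Set V} {z : V} (hzD : z ∉ D)
    (hn : z ∉ nbhd G D) : ∀ u ∈ D, z ≠ u ∧ ¬ G.Adj z u := by
  intro u hu
  refine ⟨fun h => hzD (h ▸ hu), fun hadj => hn ⟨hzD, u, hu, hadj.symm⟩⟩



lemma fin_succ_val {n : ℕ} [NeZero n] (hn : 2 ≤ n) (i : Fin n) :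
    ((i + 1 : Fin n)).val = (i.val + 1) % n := by
  have h1 : ((1 : Fin n)).val = 1 := by
    have : (1 : ℕ) < n := by omega
    simp [Fin.val_one', Nat.mod_eq_of_lt this]
  rw [Fin.val_add, h1]

lemma fin_consec_iff {n : ℕ} [NeZero n] (hn : 2 ≤ n) (i j : Fin n) :
    (i.val + 1) % n = j.val ↔ j = i + 1 := by
  rw [Fin.ext_iff, fin_succ_val hn]
  exact eq_comm

lemma chordal_elim {G : SimpleGraph V} (h : IsChordal G) {n : ℕ} [NeZero n] (hn : 4 ≤ n)
    (f : Fin n → V) (hinj : Function.Injective f)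
    (hadj : ∀ i j : Fin n, G.Adj (f i) (f j) ↔ (j = i + 1 ∨ i = j + 1)) : False := by
  refine h n hn ⟨f, hinj, fun i j => ?_⟩
  rw [hadj i j, fin_consec_iff (by omega) i j, fin_consec_iff (by omega) j i]

lemma chordal_intro {G : SimpleGraph V}
    (h : ∀ n : ℕ, 4 ≤ n → ∀ [NeZero n], ∀ f : Fin n → V, Function.Injective f →
      (∀ i j : Fin n, G.Adj (f i) (f j) ↔ (j = i + 1 ∨ i = j + 1)) → False) :
    IsChordal G := by
  rintro n hn ⟨f, hinj, hadj⟩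
  haveI : NeZero n := ⟨by omega⟩
  refine h n hn f hinj fun i j => ?_
  rw [hadj i j, fin_consec_iff (by omega) i j, fin_consec_iff (by omega) j i]

lemma rotate_cycle {G : SimpleGraph V} {n : ℕ} [NeZero n] {f : Fin n → V}
    (hadj : ∀ i j : Fin n, G.Adj (f i) (f j) ↔ (j = i + 1 ∨ i = j + 1)) (i0 : Fin n) :
    ∀ i j : Fin n, G.Adj (f (i + i0)) (f (j + i0)) ↔ (j = i + 1 ∨ i = j + 1) := by
  intro i j
  rw [hadj]
  constructor
  · rintro (h | h)
    · left
      have h2 : j + i0 = i + 1 + i0 := by rw [h]; rw [add_right_comm]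
      exact add_right_cancel h2
    · right
      have h2 : i + i0 = j + 1 + i0 := by rw [h]; rw [add_right_comm]
      exact add_right_cancel h2
  · rintro (h | h)
    · left; rw [h, add_right_comm]
    · right; rw [h, add_right_comm]


open SimpleGraph Walk

lemma getVert_mem_support {G : SimpleGraph V} {u w : V} (p : G.Walk u w) (i : ℕ) :
    p.getVert i ∈ p.support := by
  rcases le_or_gt i p.length with h | h
  · exact mem_support_iff_exists_getVert.2 ⟨i, rfl, h⟩
  · rw [getVert_of_length_le p h.le]
    exact p.end_mem_support

lemma exists_drop {G : SimpleGraph V} :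
    ∀ {u w : V} (p : G.Walk u w) (i : ℕ), i ≤ p.length →
      ∃ q : G.Walk (p.getVert i) w, q.length = p.length - i ∧
        ∀ z ∈ q.support, z ∈ p.support := by
  intro u w p
  induction p with
  | nil =>
    rename_i a
    intro i hi
    have hgv : (Walk.nil : G.Walk a a).getVert i = a :=
      Walk.getVert_of_length_le _ (by simp)
    exact ⟨(Walk.nil : G.Walk a a).copy hgv.symm rfl, by simp, by simp [hgv]⟩
  | @cons a b c h q ih =>
    intro i hi
    cases i with
    | zero =>
      exact ⟨(Walk.cons h q).copy (getVert_zero _).symm rfl, by simp, by simp⟩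
    | succ i =>
      obtain ⟨r, hr1, hr2⟩ := ih i (by simpa [Nat.succ_le_succ_iff] using hi)
      refine ⟨r.copy (by rw [getVert_cons_succ]) rfl, by simpa using hr1, ?_⟩
      intro z hz
      rw [support_copy] at hz
      rw [support_cons]
      exact List.mem_cons_of_mem _ (hr2 z hz)

lemma exists_take {G : SimpleGraph V} :
    ∀ {u w : V} (p : G.Walk u w) (i : ℕ), i ≤ p.length →
      ∃ q : G.Walk u (p.getVert i), q.length = i ∧
        ∀ z ∈ q.support, z ∈ p.support := by
  intro u w p
  induction p with
  | nil =>
    rename_i a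
    intro i hi
    have hi0 : i = 0 := by simpa using hi
    subst hi0
    have hgv : (Walk.nil : G.Walk a a).getVert 0 = a := Walk.getVert_zero _
    exact ⟨(Walk.nil : G.Walk a a).copy rfl hgv.symm, by simp, by simp [hgv]⟩
  | @cons a b c h q ih =>
    intro i hi
    cases i with
    | zero =>
      exact ⟨Walk.nil.copy rfl (getVert_zero _).symm, by simp, by simp⟩
    | succ i =>
      obtain ⟨r, hr1, hr2⟩ := ih i (by simpa [Nat.succ_le_succ_iff] using hi)
      refine ⟨(Walk.cons h r).copy rfl (by rw [getVert_cons_succ]), by simpa using hr1, ?_⟩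
      intro z hz
      rw [support_copy, support_cons] at hz
      rw [support_cons]
      rcases List.mem_cons.1 hz with rfl | hz
      · exact List.mem_cons_self
      · exact List.mem_cons_of_mem _ (hr2 z hz)

lemma path_getVert_inj {G : SimpleGraph V} :
    ∀ {u w : V} {p : G.Walk u w}, p.IsPath → ∀ {i j : ℕ}, i ≤ p.length → j ≤ p.length →
      p.getVert i = p.getVert j → i = j := by
  intro u w p
  induction p with
  | nil => intro _ i j hi hj _; simp at hi hj; omega
  | @cons a b c h q ih =>
    intro hp i j hi hj hij
    have hq : q.IsPath := hp.of_cons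
    have ha : a ∉ q.support := ((Walk.cons_isPath_iff h q).mp hp).2
    cases i with
    | zero =>
      cases j with
      | zero => rfl
      | succ j =>
        exfalso
        rw [getVert_zero, getVert_cons_succ] at hij
        exact ha (hij ▸ getVert_mem_support q j)
    | succ i =>
      cases j with
      | zero =>
        exfalso
        rw [getVert_zero, getVert_cons_succ] at hij
        exact ha (hij ▸ getVert_mem_support q i)
      | succ j =>
        rw [getVert_cons_succ, getVert_cons_succ] at hij
        have := ih hq (by simpa [Nat.succ_le_succ_iff] using hi)
          (by simpa [Nat.succ_le_succ_iff] using hj) hij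
        omega

/-- From any walk with support in `S` between distinct non-adjacent vertices,
extract an induced path with support in `S`. -/
lemma exists_induced_walk {G : SimpleGraph V} {S : Set V} {x y : V} (hxy : x ≠ y)
    (hnadj : ¬ G.Adj x y) (hw : ∃ p : G.Walk x y, ∀ z ∈ p.support, z ∈ S) :
    ∃ p : G.Walk x y, IsInducedPathW G p ∧ 2 ≤ p.length ∧ ∀ z ∈ p.support, z ∈ S := by
  classical
  set good : ℕ → Prop := fun k => ∃ p : G.Walk x y, p.length = k ∧ ∀ z ∈ p.support, z ∈ S
    with hgood
  have hex : ∃ k, good k := by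
    obtain ⟨p, hp⟩ := hw
    exact ⟨p.length, p, rfl, hp⟩
  set k := Nat.find hex with hk
  obtain ⟨p0, hp0l, hp0s⟩ : good k := Nat.find_spec hex
  have hmin : ∀ (q : G.Walk x y), (∀ z ∈ q.support, z ∈ S) → k ≤ q.length := by
    intro q hq
    exact Nat.find_le ⟨q, rfl, hq⟩
  set p := p0.bypass with hp
  have hps : ∀ z ∈ p.support, z ∈ S := fun z hz => hp0s z (p0.support_bypass_subset hz)
  have hpl : p.length = k := le_antisymm (hp0l ▸ p0.length_bypass_le) (hmin p hps)
  have hpath : p.IsPath := p0.bypass_isPath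
  have hchord : ∀ i j : ℕ, i + 2 ≤ j → j ≤ p.length → ¬ G.Adj (p.getVert i) (p.getVert j) := by
    intro i j hij hj hadj
    obtain ⟨q1, hq1l, hq1s⟩ := exists_take p i (by omega)
    obtain ⟨q2, hq2l, hq2s⟩ := exists_drop p j hj
    set q : G.Walk x y := q1.append (Walk.cons hadj q2) with hq
    have hqs : ∀ z ∈ q.support, z ∈ S := by
      intro z hz
      rw [hq, mem_support_append_iff] at hz
      rcases hz with hz | hz
      · exact hps z (hq1s z hz)
      · rw [support_cons] at hz
        rcases List.mem_cons.1 hz with rfl | hz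
        · exact hps _ (getVert_mem_support p i)
        · exact hps z (hq2s z hz)
    have hql : q.length = i + (p.length - j + 1) := by
      rw [hq, length_append, length_cons, hq1l, hq2l]
    have hge := hmin q hqs
    omega
  refine ⟨p, ⟨hpath, hchord⟩, ?_, hps⟩
  by_contra hlen
  push_neg at hlen
  interval_cases hl : p.length
  · exact hxy (Walk.eq_of_length_eq_zero hl)
  · have := p.adj_getVert_succ (by omega : 0 < p.length)
    rw [getVert_zero] at this
    have h1 : p.getVert 1 = y := by
      have := p.getVert_length
      rwa [hl] at this
    exact hnadj (h1 ▸ this)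

/-- Key covering lemma: a non-adjacent pair in a clique of a minimal chordal
completion is covered by a component of `G \ Ω`. -/
lemma stepA {G H : SimpleGraph V} (hmc : IsMinimalChordalCompletion G H)
    {Ω : Set V} (hclq : H.IsClique Ω) {x y : V} (hx : x ∈ Ω) (hy : y ∈ Ω)
    (hxy : x ≠ y) (hnadj : ¬ G.Adj x y) :
    ∃ D, IsCompOf G Ωᶜ D ∧ x ∈ nbhd G D ∧ y ∈ nbhd G D := by
  classical
  by_contra hno
  obtain ⟨hGH, hch, hmin⟩ := hmc
  have hHxy : H.Adj x y := hclq hx hy hxy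
  set A : Set V := {u | ∃ w, ConnectedIn G Ωᶜ u w ∧ G.Adj w x} with hA
  have hAc : A ⊆ Ωᶜ := by
    rintro u ⟨w, ⟨p, hp⟩, -⟩
    exact hp u p.start_mem_support
  have hyA : ∀ u ∈ A, ¬ G.Adj u y := by
    rintro u ⟨w, hc, hwx⟩ hadj
    have huΩ : u ∈ Ωᶜ := by
      obtain ⟨p, hp⟩ := hc
      exact hp u p.start_mem_support
    have hD : IsCompOf G Ωᶜ {z | ConnectedIn G Ωᶜ u z} := isCompOf_class huΩ
    refine hno ⟨_, hD, ⟨fun hxD => (hD.2.1 hxD) hx, w, hc, hwx⟩,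
      ⟨fun hyD => (hD.2.1 hyD) hy, u, connectedIn_refl huΩ, hadj⟩⟩
  have hxB : ∀ v, v ∉ Ω → v ∉ A → ¬ G.Adj v x := fun v hv hvA hadj =>
    hvA ⟨v, connectedIn_refl hv, hadj⟩
  have hAB : ∀ u ∈ A, ∀ v, v ∉ Ω → v ∉ A → ¬ G.Adj u v := by
    rintro u ⟨w, ⟨p, hp⟩, hwx⟩ v hvΩ hvA hadj
    refine hvA ⟨w, ⟨SimpleGraph.Walk.cons hadj.symm p, ?_⟩, hwx⟩
    intro z hz
    rw [SimpleGraph.Walk.support_cons, List.mem_cons] at hz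
    rcases hz with rfl | hz
    · exact hvΩ
    · exact hp z hz
  set LM : Set V := {v | v ∈ A ∨ (v ∈ Ω ∧ v ≠ y)} with hLM
  set RM : Set V := {v | (v ∈ Ω ∧ v ≠ x) ∨ (v ∉ Ω ∧ v ∉ A)} with hRM
  set H' : SimpleGraph V :=
    { Adj := fun u w => H.Adj u w ∧ ((u ∈ LM ∧ w ∈ LM) ∨ (u ∈ RM ∧ w ∈ RM)),
      symm := ⟨by rintro u w ⟨h1, h2⟩; exact ⟨h1.symm, by tauto⟩⟩,
      loopless := ⟨fun u h => H.irrefl h.1⟩ } with hH'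
  have hH'adj : ∀ u w, H'.Adj u w ↔
      (H.Adj u w ∧ ((u ∈ LM ∧ w ∈ LM) ∨ (u ∈ RM ∧ w ∈ RM))) := fun u w => Iff.rfl
  have hH'le : H' ≤ H := by intro u w h; exact h.1
  have hGle : G ≤ H' := by
    intro u w hadj
    have hne' : u ≠ w := hadj.ne
    refine (hH'adj u w).2 ⟨hGH hadj, ?_⟩
    by_cases huΩ : u ∈ Ω <;> by_cases hwΩ : w ∈ Ω
    · by_cases huy : u = y
      · subst huy
        have hwx : w ≠ x := fun h => hnadj (by rw [h] at hadj; exact hadj.symm)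
        exact Or.inr ⟨Or.inl ⟨huΩ, Ne.symm hxy⟩, Or.inl ⟨hwΩ, hwx⟩⟩
      · by_cases hwy : w = y
        · subst hwy
          have hux : u ≠ x := fun h => hnadj (by rw [h] at hadj; exact hadj)
          exact Or.inr ⟨Or.inl ⟨huΩ, hux⟩, Or.inl ⟨hwΩ, Ne.symm hxy⟩⟩
        · exact Or.inl ⟨Or.inr ⟨huΩ, huy⟩, Or.inr ⟨hwΩ, hwy⟩⟩
    · by_cases hwA : w ∈ A
      · have huy : u ≠ y := fun h => hyA w hwA (h ▸ hadj.symm)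
        exact Or.inl ⟨Or.inr ⟨huΩ, huy⟩, Or.inl hwA⟩
      · have hux : u ≠ x := fun h => hxB w hwΩ hwA (h ▸ hadj.symm)
        exact Or.inr ⟨Or.inl ⟨huΩ, hux⟩, Or.inr ⟨hwΩ, hwA⟩⟩
    · by_cases huA : u ∈ A
      · have hwy : w ≠ y := fun h => hyA u huA (h ▸ hadj)
        exact Or.inl ⟨Or.inl huA, Or.inr ⟨hwΩ, hwy⟩⟩
      · have hwx : w ≠ x := fun h => hxB u huΩ huA (h ▸ hadj)
        exact Or.inr ⟨Or.inr ⟨huΩ, huA⟩, Or.inl ⟨hwΩ, hwx⟩⟩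
    · by_cases huA : u ∈ A <;> by_cases hwA : w ∈ A
      · exact Or.inl ⟨Or.inl huA, Or.inl hwA⟩
      · exact absurd hadj (hAB u huA w hwΩ hwA)
      · exact absurd hadj.symm (hAB w hwA u huΩ huA)
      · exact Or.inr ⟨Or.inr ⟨huΩ, huA⟩, Or.inr ⟨hwΩ, hwA⟩⟩
  have hneq : H' ≠ H := by
    intro he
    have h2 : H'.Adj x y := he ▸ hHxy
    rcases ((hH'adj x y).1 h2).2 with ⟨-, h4⟩ | ⟨h3, -⟩
    · rcases h4 with h4 | ⟨-, h4⟩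
      · exact hAc h4 hy
      · exact h4 rfl
    · rcases h3 with ⟨-, h3⟩ | ⟨h3, -⟩
      · exact h3 rfl
      · exact h3 hx
  -- chordality of H'
  have hch' : IsChordal H' := by
    apply chordal_intro
    intro n hn _inst f hinj hadjf
    have hn2 : 2 ≤ n := by omega
    by_cases hallL : ∀ i, f i ∈ LM
    · exact chordal_elim hch hn f hinj fun i j =>
        ⟨fun h => (hadjf i j).1 ((hH'adj _ _).2 ⟨h, Or.inl ⟨hallL i, hallL j⟩⟩),
         fun h => hH'le ((hadjf i j).2 h)⟩
    by_cases hallR : ∀ i, f i ∈ RM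
    · exact chordal_elim hch hn f hinj fun i j =>
        ⟨fun h => (hadjf i j).1 ((hH'adj _ _).2 ⟨h, Or.inr ⟨hallR i, hallR j⟩⟩),
         fun h => hH'le ((hadjf i j).2 h)⟩
    push_neg at hallL hallR
    obtain ⟨i1, hi1⟩ := hallL
    obtain ⟨i2, hi2⟩ := hallR
    -- L := A ∪ {x}, R := B ∪ {y}
    have hLMc : ∀ z, z ∉ LM → ((z ∉ Ω ∧ z ∉ A) ∨ z = y) := by
      intro z hz
      rw [hLM, Set.mem_setOf_eq] at hz
      push_neg at hz
      by_cases hzΩ : z ∈ Ω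
      · exact Or.inr (hz.2 hzΩ)
      · exact Or.inl ⟨hzΩ, hz.1⟩
    have hRMc : ∀ z, z ∉ RM → (z ∈ A ∨ z = x) := by
      intro z hz
      rw [hRM, Set.mem_setOf_eq] at hz
      push_neg at hz
      by_cases hzΩ : z ∈ Ω
      · exact Or.inr (hz.1 hzΩ)
      · exact Or.inl (hz.2 hzΩ)
    have hLRdisj : ∀ z, (z ∉ Ω ∧ z ∉ A) ∨ z = y → ¬ (z ∈ A ∨ z = x) := by
      rintro z (⟨hzΩ, hzA⟩ | rfl) (h | rfl)
      · exact hzA h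
      · exact hzΩ hx
      · exact hAc h hy
      · exact hxy rfl
    have hLR_nadj : ∀ u z, (u ∈ A ∨ u = x) → ((z ∉ Ω ∧ z ∉ A) ∨ z = y) → ¬ H'.Adj u z := by
      rintro u z hu hz hadj
      rcases ((hH'adj u z).1 hadj).2 with ⟨-, h4⟩ | ⟨h3, -⟩
      · -- z ∈ LM
        rcases h4 with h4 | ⟨h4, h5⟩
        · rcases hz with ⟨-, hzA⟩ | rfl
          · exact hzA h4
          · exact hAc h4 hy
        · rcases hz with ⟨hzΩ, -⟩ | rfl
          · exact hzΩ h4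
          · exact h5 rfl
      · -- u ∈ RM
        rcases h3 with ⟨h3, h4⟩ | ⟨h3, h4⟩
        · rcases hu with hu | rfl
          · exact (hAc hu) h3
          · exact h4 rfl
        · rcases hu with hu | rfl
          · exact h4 hu
          · exact h3 hx
    have hM_clique : ∀ u z, u ∈ Ω → u ≠ x → u ≠ y → z ∈ Ω → z ≠ x → z ≠ y → u ≠ z →
        H'.Adj u z := fun u z huΩ _ huy hzΩ _ hzy huz =>
      (hH'adj u z).2 ⟨hclq huΩ hzΩ huz, Or.inl ⟨Or.inr ⟨huΩ, huy⟩, Or.inr ⟨hzΩ, hzy⟩⟩⟩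
    have hpart : ∀ z, (z ∈ A ∨ z = x) ∨ (z ∈ Ω ∧ z ≠ x ∧ z ≠ y) ∨ ((z ∉ Ω ∧ z ∉ A) ∨ z = y) := by
      intro z
      by_cases hzΩ : z ∈ Ω
      · by_cases hzx : z = x
        · exact Or.inl (Or.inr hzx)
        · by_cases hzy : z = y
          · exact Or.inr (Or.inr (Or.inr hzy))
          · exact Or.inr (Or.inl ⟨hzΩ, hzx, hzy⟩)
      · by_cases hzA : z ∈ A
        · exact Or.inl (Or.inl hzA)
        · exact Or.inr (Or.inr (Or.inl ⟨hzΩ, hzA⟩))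
    -- rotate so that position 0 is in L
    set g : Fin n → V := fun k => f (k + i2) with hg
    have hginj : Function.Injective g := fun a b h => add_right_cancel (hinj h)
    have hgadj : ∀ i j : Fin n, H'.Adj (g i) (g j) ↔ (j = i + 1 ∨ i = j + 1) :=
      rotate_cycle hadjf i2
    have hg0 : g 0 ∈ A ∨ g 0 = x := by
      have : g 0 = f i2 := by rw [hg]; simp
      rw [this]; exact hRMc _ hi2
    set j0 : Fin n := i1 - i2 with hj0
    have hgj0 : (g j0 ∉ Ω ∧ g j0 ∉ A) ∨ g j0 = y := by
      have : g j0 = f i1 := by rw [hg, hj0]; simp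
      rw [this]; exact hLMc _ hi1
    set T : Finset (Fin n) := Finset.univ.filter (fun k => ¬ (g k ∈ A ∨ g k = x)) with hT
    have hmemT : ∀ k, k ∈ T ↔ ¬ (g k ∈ A ∨ g k = x) := by
      intro k; rw [hT, Finset.mem_filter]; simp
    have hj0T : j0 ∈ T := (hmemT j0).2 (hLRdisj _ hgj0)
    have hTne : T.Nonempty := ⟨j0, hj0T⟩
    have h0T : (0 : Fin n) ∉ T := fun h => ((hmemT 0).1 h) hg0
    set m1 := T.min' hTne with hm1
    set m2 := T.max' hTne with hm2
    have hm1T : m1 ∈ T := T.min'_mem hTne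
    have hm2T : m2 ∈ T := T.max'_mem hTne
    have hm1v : 1 ≤ m1.val := by
      rcases Nat.eq_zero_or_pos m1.val with h | h
      · exact absurd (show m1 = 0 from Fin.ext (by simp [h])) (fun he => h0T (he ▸ hm1T))
      · exact h
    -- predecessor of m1 is in L
    have hm1lt : m1.val < n := m1.isLt
    set m1' : Fin n := ⟨m1.val - 1, by omega⟩ with hm1'
    have hm1'T : m1' ∉ T := by
      intro h
      have := T.min'_le m1' h
      rw [← hm1] at this
      have h2 : m1.val ≤ m1'.val := this
      rw [hm1'] at h2; simp at h2; omega
    have hgm1' : g m1' ∈ A ∨ g m1' = x := by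
      by_contra h; exact hm1'T ((hmemT m1').2 h)
    have hsucc1 : m1' + 1 = m1 := by
      apply Fin.ext
      rw [fin_succ_val hn2]
      rw [hm1']
      simp only []
      have : m1.val - 1 + 1 = m1.val := by omega
      rw [this, Nat.mod_eq_of_lt hm1lt]
    have hadj1 : H'.Adj (g m1') (g m1) := (hgadj m1' m1).2 (Or.inl hsucc1.symm)
    have hgm1M : g m1 ∈ Ω ∧ g m1 ≠ x ∧ g m1 ≠ y := by
      rcases hpart (g m1) with h | h | h
      · exact absurd h ((hmemT m1).1 hm1T)
      · exact h
      · exact absurd hadj1 (fun ha => hLR_nadj _ _ hgm1' h ha)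
    -- successor of m2 is in L
    set m2s : Fin n := m2 + 1 with hm2s
    have hm2sT : m2s ∉ T := by
      intro h
      have hle := T.le_max' m2s h
      rw [← hm2] at hle
      have h2 : m2s.val ≤ m2.val := hle
      have h3 : m2s.val = (m2.val + 1) % n := by rw [hm2s]; exact fin_succ_val hn2 m2
      rcases Nat.lt_or_ge (m2.val + 1) n with h4 | h4
      · rw [Nat.mod_eq_of_lt h4] at h3; omega
      · have h5 : m2.val + 1 = n := by have := m2.isLt; omega
        have h6 : m2s.val = 0 := by rw [h3, h5]; simp
        exact h0T (show (0:Fin n) ∈ T from (Fin.ext h6 : m2s = 0) ▸ h)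
    have hgm2s : g m2s ∈ A ∨ g m2s = x := by
      by_contra h; exact hm2sT ((hmemT m2s).2 h)
    have hadj2 : H'.Adj (g m2) (g m2s) := (hgadj m2 m2s).2 (Or.inl rfl)
    have hgm2M : g m2 ∈ Ω ∧ g m2 ≠ x ∧ g m2 ≠ y := by
      rcases hpart (g m2) with h | h | h
      · exact absurd h ((hmemT m2).1 hm2T)
      · exact h
      · exact absurd hadj2.symm (fun ha => hLR_nadj _ _ hgm2s h ha)
    -- m1 < j0 < m2
    have hm1j0 : m1.val ≤ j0.val := T.min'_le j0 hj0T
    have hj0m2 : j0.val ≤ m2.val := T.le_max' j0 hj0T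
    have hm1nej0 : m1 ≠ j0 := by
      intro h
      rcases hgj0 with ⟨hj1, -⟩ | hj2
      · exact hj1 (h ▸ hgm1M.1)
      · exact hgm1M.2.2 (h ▸ hj2)
    have hm2nej0 : m2 ≠ j0 := by
      intro h
      rcases hgj0 with ⟨hj1, -⟩ | hj2
      · exact hj1 (h ▸ hgm2M.1)
      · exact hgm2M.2.2 (h ▸ hj2)
    have hm1j0' : m1.val < j0.val := lt_of_le_of_ne hm1j0 (fun h => hm1nej0 (Fin.ext h))
    have hj0m2' : j0.val < m2.val := lt_of_le_of_ne hj0m2 (fun h => hm2nej0 (Fin.ext h.symm))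
    have hm12 : m1 ≠ m2 := fun h => by rw [h] at hm1j0'; omega
    have hadjc : H'.Adj (g m1) (g m2) :=
      hM_clique _ _ hgm1M.1 hgm1M.2.1 hgm1M.2.2 hgm2M.1 hgm2M.2.1 hgm2M.2.2
        (fun h => hm12 (hginj h))
    rcases (hgadj m1 m2).1 hadjc with h | h
    · have hv : m2.val = (m1.val + 1) % n := by rw [h]; exact fin_succ_val hn2 m1
      have h4 : m1.val + 1 < n := by have := m2.isLt; omega
      rw [Nat.mod_eq_of_lt h4] at hv; omega
    · have hv : m1.val = (m2.val + 1) % n := by rw [h]; exact fin_succ_val hn2 m2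
      rcases Nat.lt_or_ge (m2.val + 1) n with h4 | h4
      · rw [Nat.mod_eq_of_lt h4] at hv; omega
      · have h5 : m2.val + 1 = n := by have := m2.isLt; omega
        rw [h5, Nat.mod_self] at hv; omega
  exact hneq (hmin H' hGle hH'le hch')


lemma swapNA {G : SimpleGraph V} {a b : V} (h : a ≠ b ∧ ¬ G.Adj a b) :
    b ≠ a ∧ ¬ G.Adj b a := ⟨h.1.symm, fun ha => h.2 ha.symm⟩

lemma nbhd_exact [Finite V] {G : SimpleGraph V} {D Y : Set V}
    (hc : (nbhd G D ∩ Y).ncard ≤ 2) {a b : V} (ha : a ∈ nbhd G D) (haY : a ∈ Y)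
    (hb : b ∈ nbhd G D) (hbY : b ∈ Y) (hab : a ≠ b) :
    ∀ z ∈ Y, z ≠ a → z ≠ b → z ∉ nbhd G D := by
  intro z hzY hza hzb hz
  have hsub : ({a, b, z} : Set V) ⊆ nbhd G D ∩ Y := by
    intro t ht
    rcases ht with rfl | rfl | rfl
    · exact ⟨ha, haY⟩
    · exact ⟨hb, hbY⟩
    · exact ⟨hz, hzY⟩
  have h3 : ({a, b, z} : Set V).ncard = 3 := by
    rw [Set.ncard_insert_of_notMem (by simp [hab, Ne.symm hza]) (Set.toFinite _),
      Set.ncard_insert_of_notMem (by simp [Ne.symm hzb]) (Set.toFinite _),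
      Set.ncard_singleton]
  have := Set.ncard_le_ncard hsub (Set.toFinite _)
  omega

lemma nbhd_path {G : SimpleGraph V} {S D : Set V} (hD : IsCompOf G S D) {x y : V}
    (hx : x ∈ nbhd G D) (hy : y ∈ nbhd G D) (hxy : x ≠ y) (hnadj : ¬ G.Adj x y) :
    ∃ p : G.Walk x y, IsInducedPathW G p ∧ 2 ≤ p.length ∧
      ∀ z ∈ p.support, z ∈ D ∪ {x, y} := by
  obtain ⟨hxD, u, huD, hux⟩ := hx
  obtain ⟨hyD, w, hwD, hwy⟩ := hy
  obtain ⟨q, hq⟩ := hD.2.2.1 u huD w hwD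
  apply exists_induced_walk hxy hnadj
  refine ⟨SimpleGraph.Walk.cons hux.symm (q.concat hwy), ?_⟩
  intro z hz
  rw [SimpleGraph.Walk.support_cons] at hz
  rcases List.mem_cons.1 hz with rfl | hz
  · exact Or.inr (by simp)
  · rw [SimpleGraph.Walk.support_concat, List.mem_append,
      List.mem_singleton] at hz
    rcases hz with hz | rfl
    · exact Or.inl (hq z hz)
    · exact Or.inr (by simp)

lemma join_paths {G : SimpleGraph V} {a b c : V} {D1 D2 : Set V}
    (hab : a ≠ b) (hac : a ≠ c) (hbc : b ≠ c) (hnab : ¬ G.Adj a b)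
    (P : G.Walk a c) (Q : G.Walk c b)
    (hP : IsInducedPathW G P) (hQ : IsInducedPathW G Q)
    (hPl : 2 ≤ P.length) (hQl : 2 ≤ Q.length)
    (hPs : ∀ z ∈ P.support, z ∈ D1 ∪ {a, c})
    (hQs : ∀ z ∈ Q.support, z ∈ D2 ∪ {c, b})
    (hDD : ∀ u ∈ D1, ∀ w ∈ D2, u ≠ w ∧ ¬ G.Adj u w)
    (haD2 : ∀ w ∈ D2, a ≠ w ∧ ¬ G.Adj a w)
    (hbD1 : ∀ u ∈ D1, b ≠ u ∧ ¬ G.Adj b u)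
    (hcD1 : c ∉ D1) (hcD2 : c ∉ D2) :
    IsInducedPathW G (P.append Q) ∧ 2 ≤ (P.append Q).length := by
  obtain ⟨hPp, hPc⟩ := hP
  obtain ⟨hQp, hQc⟩ := hQ
  have hPm : ∀ z ∈ P.support, z ≠ c → (z ∈ D1 ∨ z = a) := by
    intro z hz hzc
    rcases hPs z hz with h | h
    · exact Or.inl h
    · rcases h with h | h
      · exact Or.inr h
      · exact absurd (by simpa using h) hzc
  have hQm : ∀ z ∈ Q.support, z ≠ c → (z ∈ D2 ∨ z = b) := by
    intro z hz hzc
    rcases hQs z hz with h | h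
    · exact Or.inl h
    · rcases h with h | h
      · exact absurd (by simpa using h) hzc
      · exact Or.inr (by simpa using h)
  have key : ∀ u w, (u ∈ D1 ∨ u = a) → (w ∈ D2 ∨ w = b) → u ≠ w ∧ ¬ G.Adj u w := by
    rintro u w (hu | rfl) (hw | rfl)
    · exact hDD u hu w hw
    · exact swapNA (hbD1 u hu)
    · exact haD2 w hw
    · exact ⟨hab, hnab⟩
  refine ⟨⟨?_, ?_⟩, ?_⟩
  · -- IsPath
    rw [SimpleGraph.Walk.isPath_def, SimpleGraph.Walk.support_append, List.nodup_append]
    have hQn := hQp.support_nodup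
    rw [Q.support_eq_cons] at hQn
    refine ⟨hPp.support_nodup, (List.nodup_cons.mp hQn).2, ?_⟩
    intro z hzP w hzQt heq
    subst heq
    have hzQ : z ∈ Q.support := List.mem_of_mem_tail hzQt
    by_cases hzc : z = c
    · subst hzc
      exact (List.nodup_cons.mp hQn).1 hzQt
    · exact (key z z (hPm z hzP hzc) (hQm z hzQ hzc)).1 rfl
  · -- chord-free
    intro i j hij hj hadj
    rw [SimpleGraph.Walk.length_append] at hj
    have hglP : ∀ k, k ≤ P.length → (P.append Q).getVert k = P.getVert k := by
      intro k hk
      rw [SimpleGraph.Walk.getVert_append]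
      rcases lt_or_eq_of_le hk with h | h
      · rw [if_pos h]
      · rw [h, if_neg (lt_irrefl _), Nat.sub_self, SimpleGraph.Walk.getVert_zero,
          SimpleGraph.Walk.getVert_length]
    have hglQ : ∀ k, P.length ≤ k → (P.append Q).getVert k = Q.getVert (k - P.length) := by
      intro k hk
      rw [SimpleGraph.Walk.getVert_append, if_neg (by omega)]
    rcases le_or_gt j P.length with hjP | hjP
    · rw [hglP i (by omega), hglP j hjP] at hadj
      exact hPc i j hij hjP hadj
    · rcases le_or_gt P.length i with hiP | hiP
      · rw [hglQ i hiP, hglQ j (by omega)] at hadj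
        exact hQc (i - P.length) (j - P.length) (by omega) (by omega) hadj
      · rw [hglP i (by omega), hglQ j (by omega)] at hadj
        have huc : P.getVert i ≠ c := by
          intro h
          have heq : P.getVert i = P.getVert P.length := by
            rw [SimpleGraph.Walk.getVert_length]; exact h
          have := path_getVert_inj hPp (by omega) le_rfl heq
          omega
        have hwc : Q.getVert (j - P.length) ≠ c := by
          intro h
          have heq : Q.getVert (j - P.length) = Q.getVert 0 := by
            rw [SimpleGraph.Walk.getVert_zero]; exact h
          have := path_getVert_inj hQp (by omega) (by omega) heq
          omega
        exact (key _ _ (hPm _ (getVert_mem_support P i) huc)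
          (hQm _ (getVert_mem_support Q _) hwc)).2 hadj
  · rw [SimpleGraph.Walk.length_append]; omega

end Aux

/-- In a theta-free graph, a stable subset `Y` of a potential maximal clique
`Ω` meeting each minimal separator `N(D)` (for components `D` of `G \ Ω`) in
at most two vertices has size at most 3. -/
theorem stmt10 [Finite V] (G : SimpleGraph V) (hfree : ¬ HasTheta G)
    (Ω : Set V) (hΩ : IsPMC G Ω) (Y : Set V) (hYΩ : Y ⊆ Ω)
    (hst : StableSet G Y)
    (hcov : ∀ D, IsCompOf G Ωᶜ D → (nbhd G D ∩ Y).ncard ≤ 2) :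
    Y.ncard ≤ 3 := by
  classical
  by_contra hY3
  push_neg at hY3
  have hfin : Y.Finite := Set.toFinite Y
  obtain ⟨H, hmc, hclq, -⟩ := hΩ
  -- extract four distinct elements of Y
  obtain ⟨y1, hy1Y⟩ := (Set.ncard_pos hfin).1 (by omega)
  have hc1 : (Y \ {y1}).ncard = Y.ncard - 1 := Set.ncard_diff_singleton_of_mem hy1Y
  obtain ⟨y2, hy2⟩ := (Set.ncard_pos (Set.toFinite (Y \ {y1}))).1 (by omega)
  have hc2 : ((Y \ {y1}) \ {y2}).ncard = Y.ncard - 2 := by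
    rw [Set.ncard_diff_singleton_of_mem hy2, hc1]
    omega
  obtain ⟨y3, hy3⟩ := (Set.ncard_pos (Set.toFinite ((Y \ {y1}) \ {y2}))).1 (by omega)
  have hc3 : (((Y \ {y1}) \ {y2}) \ {y3}).ncard = Y.ncard - 3 := by
    rw [Set.ncard_diff_singleton_of_mem hy3, hc2]
    omega
  obtain ⟨y4, hy4⟩ := (Set.ncard_pos (Set.toFinite (((Y \ {y1}) \ {y2}) \ {y3}))).1 (by omega)
  obtain ⟨⟨⟨hy4Y, hy41⟩, hy42⟩, hy43⟩ := hy4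
  obtain ⟨⟨hy3Y, hy31⟩, hy32⟩ := hy3
  obtain ⟨hy2Y, hy21⟩ := hy2
  have ne12 : y1 ≠ y2 := fun h => (by simpa using hy21 : y2 ≠ y1) h.symm
  have ne13 : y1 ≠ y3 := fun h => (by simpa using hy31 : y3 ≠ y1) h.symm
  have ne14 : y1 ≠ y4 := fun h => (by simpa using hy41 : y4 ≠ y1) h.symm
  have ne23 : y2 ≠ y3 := fun h => (by simpa using hy32 : y3 ≠ y2) h.symm
  have ne24 : y2 ≠ y4 := fun h => (by simpa using hy42 : y4 ≠ y2) h.symm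
  have ne34 : y3 ≠ y4 := fun h => (by simpa using hy43 : y4 ≠ y3) h.symm
  have na12 : ¬ G.Adj y1 y2 := hst y1 hy1Y y2 hy2Y
  have na13 : ¬ G.Adj y1 y3 := hst y1 hy1Y y3 hy3Y
  have na14 : ¬ G.Adj y1 y4 := hst y1 hy1Y y4 hy4Y
  have na32 : ¬ G.Adj y3 y2 := hst y3 hy3Y y2 hy2Y
  have na42 : ¬ G.Adj y4 y2 := hst y4 hy4Y y2 hy2Y
  have na34 : ¬ G.Adj y3 y4 := hst y3 hy3Y y4 hy4Y
  -- covering components for the five relevant pairs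
  obtain ⟨D12, hD12, m12_1, m12_2⟩ :=
    Aux.stepA hmc hclq (hYΩ hy1Y) (hYΩ hy2Y) ne12 na12
  obtain ⟨D13, hD13, m13_1, m13_3⟩ :=
    Aux.stepA hmc hclq (hYΩ hy1Y) (hYΩ hy3Y) ne13 na13
  obtain ⟨D23, hD23, m23_3, m23_2⟩ :=
    Aux.stepA hmc hclq (hYΩ hy3Y) (hYΩ hy2Y) ne23.symm na32
  obtain ⟨D14, hD14, m14_1, m14_4⟩ :=
    Aux.stepA hmc hclq (hYΩ hy1Y) (hYΩ hy4Y) ne14 na14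
  obtain ⟨D24, hD24, m24_4, m24_2⟩ :=
    Aux.stepA hmc hclq (hYΩ hy4Y) (hYΩ hy2Y) ne24.symm na42
  -- each component sees exactly its two vertices of Y
  have ex12 := Aux.nbhd_exact (hcov D12 hD12) m12_1 hy1Y m12_2 hy2Y ne12
  have ex13 := Aux.nbhd_exact (hcov D13 hD13) m13_1 hy1Y m13_3 hy3Y ne13
  have ex23 := Aux.nbhd_exact (hcov D23 hD23) m23_3 hy3Y m23_2 hy2Y ne23.symm
  have ex14 := Aux.nbhd_exact (hcov D14 hD14) m14_1 hy1Y m14_4 hy4Y ne14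
  have ex24 := Aux.nbhd_exact (hcov D24 hD24) m24_4 hy4Y m24_2 hy2Y ne24.symm
  have n12_3 : y3 ∉ nbhd G D12 := ex12 y3 hy3Y ne13.symm ne23.symm
  have n12_4 : y4 ∉ nbhd G D12 := ex12 y4 hy4Y ne14.symm ne24.symm
  have n13_2 : y2 ∉ nbhd G D13 := ex13 y2 hy2Y ne12.symm ne23
  have n13_4 : y4 ∉ nbhd G D13 := ex13 y4 hy4Y ne14.symm ne34.symm
  have n23_1 : y1 ∉ nbhd G D23 := ex23 y1 hy1Y ne13 ne12
  have n23_4 : y4 ∉ nbhd G D23 := ex23 y4 hy4Y ne34.symm ne24.symm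
  have n14_2 : y2 ∉ nbhd G D14 := ex14 y2 hy2Y ne12.symm ne24
  have n14_3 : y3 ∉ nbhd G D14 := ex14 y3 hy3Y ne13.symm ne34
  have n24_1 : y1 ∉ nbhd G D24 := ex24 y1 hy1Y ne14 ne12
  have n24_3 : y3 ∉ nbhd G D24 := ex24 y3 hy3Y ne34 ne23.symm
  -- the five components are pairwise distinct (for the pairs we need)
  have d_12_13 : D12 ≠ D13 := fun h => n12_3 (h ▸ m13_3)
  have d_12_23 : D12 ≠ D23 := fun h => n12_3 (h ▸ m23_3)
  have d_12_14 : D12 ≠ D14 := fun h => n12_4 (h ▸ m14_4)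
  have d_12_24 : D12 ≠ D24 := fun h => n12_4 (h ▸ m24_4)
  have d_13_23 : D13 ≠ D23 := fun h => n13_2 (h ▸ m23_2)
  have d_13_14 : D13 ≠ D14 := fun h => n13_4 (h ▸ m14_4)
  have d_13_24 : D13 ≠ D24 := fun h => n13_4 (h ▸ m24_4)
  have d_23_14 : D23 ≠ D14 := fun h => n23_4 (h ▸ m14_4)
  have d_23_24 : D23 ≠ D24 := fun h => n23_4 (h ▸ m24_4)
  have d_14_24 : D14 ≠ D24 := fun h => n14_2 (h ▸ m24_2)
  -- anticompleteness between distinct components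
  have A_12_13 := Aux.comp_anticomplete hD12 hD13 d_12_13
  have A_12_23 := Aux.comp_anticomplete hD12 hD23 d_12_23
  have A_12_14 := Aux.comp_anticomplete hD12 hD14 d_12_14
  have A_12_24 := Aux.comp_anticomplete hD12 hD24 d_12_24
  have A_13_23 := Aux.comp_anticomplete hD13 hD23 d_13_23
  have A_13_14 := Aux.comp_anticomplete hD13 hD14 d_13_14
  have A_13_24 := Aux.comp_anticomplete hD13 hD24 d_13_24
  have A_23_14 := Aux.comp_anticomplete hD23 hD14 d_23_14
  have A_23_24 := Aux.comp_anticomplete hD23 hD24 d_23_24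
  have A_14_24 := Aux.comp_anticomplete hD14 hD24 d_14_24
  -- vertices of Y are not in any component
  have notinD : ∀ (D : Set V), IsCompOf G Ωᶜ D → ∀ z ∈ Y, z ∉ D :=
    fun D hD z hz hzD => (hD.2.1 hzD) (hYΩ hz)
  have S12_3 := Aux.sep_vertex (notinD D12 hD12 y3 hy3Y) n12_3
  have S12_4 := Aux.sep_vertex (notinD D12 hD12 y4 hy4Y) n12_4
  have S13_2 := Aux.sep_vertex (notinD D13 hD13 y2 hy2Y) n13_2
  have S13_4 := Aux.sep_vertex (notinD D13 hD13 y4 hy4Y) n13_4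
  have S23_1 := Aux.sep_vertex (notinD D23 hD23 y1 hy1Y) n23_1
  have S23_4 := Aux.sep_vertex (notinD D23 hD23 y4 hy4Y) n23_4
  have S14_2 := Aux.sep_vertex (notinD D14 hD14 y2 hy2Y) n14_2
  have S14_3 := Aux.sep_vertex (notinD D14 hD14 y3 hy3Y) n14_3
  have S24_1 := Aux.sep_vertex (notinD D24 hD24 y1 hy1Y) n24_1
  have S24_3 := Aux.sep_vertex (notinD D24 hD24 y3 hy3Y) n24_3
  -- induced paths through the components
  obtain ⟨P1, hP1i, hP1l, hP1s⟩ := Aux.nbhd_path hD12 m12_1 m12_2 ne12 na12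
  obtain ⟨Q13, hQ13i, hQ13l, hQ13s⟩ := Aux.nbhd_path hD13 m13_1 m13_3 ne13 na13
  obtain ⟨Q32, hQ32i, hQ32l, hQ32s⟩ := Aux.nbhd_path hD23 m23_3 m23_2 ne23.symm na32
  obtain ⟨Q14, hQ14i, hQ14l, hQ14s⟩ := Aux.nbhd_path hD14 m14_1 m14_4 ne14 na14
  obtain ⟨Q42, hQ42i, hQ42l, hQ42s⟩ := Aux.nbhd_path hD24 m24_4 m24_2 ne24.symm na42
  -- join into two long paths from y1 to y2
  have hJ2 := Aux.join_paths ne12 ne13 ne23 na12 Q13 Q32 hQ13i hQ32i hQ13l hQ32l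
    hQ13s hQ32s A_13_23 S23_1 S13_2 (notinD D13 hD13 y3 hy3Y) (notinD D23 hD23 y3 hy3Y)
  have hJ3 := Aux.join_paths ne12 ne14 ne24 na12 Q14 Q42 hQ14i hQ42i hQ14l hQ42l
    hQ14s hQ42s A_14_24 S24_1 S14_2 (notinD D14 hD14 y4 hy4Y) (notinD D24 hD24 y4 hy4Y)
  -- support classification
  have cls1 : ∀ z ∈ P1.support, z ≠ y1 → z ≠ y2 → z ∈ D12 := by
    intro z hz h1 h2
    rcases hP1s z hz with h | h
    · exact h
    · rcases (by simpa using h : z = y1 ∨ z = y2) with rfl | rfl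
      · exact absurd rfl h1
      · exact absurd rfl h2
  have cls2 : ∀ z ∈ (Q13.append Q32).support, z ≠ y1 → z ≠ y2 →
      (z ∈ D13 ∨ z ∈ D23 ∨ z = y3) := by
    intro z hz h1 h2
    rcases (SimpleGraph.Walk.mem_support_append_iff _ _).1 hz with hz | hz
    · rcases hQ13s z hz with h | h
      · exact Or.inl h
      · rcases (by simpa using h : z = y1 ∨ z = y3) with rfl | rfl
        · exact absurd rfl h1
        · exact Or.inr (Or.inr rfl)
    · rcases hQ32s z hz with h | h
      · exact Or.inr (Or.inl h)
      · rcases (by simpa using h : z = y3 ∨ z = y2) with rfl | rfl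
        · exact Or.inr (Or.inr rfl)
        · exact absurd rfl h2
  have cls3 : ∀ z ∈ (Q14.append Q42).support, z ≠ y1 → z ≠ y2 →
      (z ∈ D14 ∨ z ∈ D24 ∨ z = y4) := by
    intro z hz h1 h2
    rcases (SimpleGraph.Walk.mem_support_append_iff _ _).1 hz with hz | hz
    · rcases hQ14s z hz with h | h
      · exact Or.inl h
      · rcases (by simpa using h : z = y1 ∨ z = y4) with rfl | rfl
        · exact absurd rfl h1
        · exact Or.inr (Or.inr rfl)
    · rcases hQ42s z hz with h | h
      · exact Or.inr (Or.inl h)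
      · rcases (by simpa using h : z = y4 ∨ z = y2) with rfl | rfl
        · exact Or.inr (Or.inr rfl)
        · exact absurd rfl h2
  -- interior disjointness / anticompleteness
  have I12 : IntDisjAnticomplete G P1 (Q13.append Q32) := by
    intro u hu w hw hu1 hu2 hw1 hw2
    have hu' := cls1 u hu hu1 hu2
    rcases cls2 w hw hw1 hw2 with h | h | rfl
    · exact A_12_13 u hu' w h
    · exact A_12_23 u hu' w h
    · exact Aux.swapNA (S12_3 u hu')
  have I13 : IntDisjAnticomplete G P1 (Q14.append Q42) := by
    intro u hu w hw hu1 hu2 hw1 hw2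
    have hu' := cls1 u hu hu1 hu2
    rcases cls3 w hw hw1 hw2 with h | h | rfl
    · exact A_12_14 u hu' w h
    · exact A_12_24 u hu' w h
    · exact Aux.swapNA (S12_4 u hu')
  have I23 : IntDisjAnticomplete G (Q13.append Q32) (Q14.append Q42) := by
    intro u hu w hw hu1 hu2 hw1 hw2
    rcases cls2 u hu hu1 hu2 with h | h | rfl
    · rcases cls3 w hw hw1 hw2 with g | g | rfl
      · exact A_13_14 u h w g
      · exact A_13_24 u h w g
      · exact Aux.swapNA (S13_4 u h)
    · rcases cls3 w hw hw1 hw2 with g | g | rfl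
      · exact A_23_14 u h w g
      · exact A_23_24 u h w g
      · exact Aux.swapNA (S23_4 u h)
    · rcases cls3 w hw hw1 hw2 with g | g | rfl
      · exact S14_3 w g
      · exact S24_3 w g
      · exact ⟨ne34, na34⟩
  exact hfree ⟨y1, y2, P1, Q13.append Q32, Q14.append Q42, na12,
    hP1i, hP1l, hJ2.1, hJ2.2, hJ3.1, hJ3.2, I12, I13, I23⟩
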